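/- Let X, Y be Banach spaces, G ⊆ X open, and f : G → Y a continuous mapping. Let V₁ be a closed subspace of X such that L(V₁,Y) is separable. Then there exists a meager set A ⊆ G such that for each x ∈ G \ A: if f is Fréchet differentiable at x along V₁ and along some closed subspace V₂ that is a topological complement of V₁ in X, then f is Fréchet differentiable at x. -/

import Mathlib

open Metric Set Topology

variable {X Y : Type*} [NormedAddCommGroup X] [NormedSpace ℝ X] [CompleteSpace X]
  [NormedAddCommGroup Y] [NormedSpace ℝ Y] [CompleteSpace Y]

/-- `f` is Fréchet differentiable at `a` along the subspace `V`. -/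
def FrechetDiffAlong (f : X → Y) (V : Submodule ℝ X) (a : X) : Prop :=
  DifferentiableAt ℝ (fun v : V => f (a + (v : X))) (0 : V)

open Asymptotics

set_option linter.unusedSectionVars false
set_option maxHeartbeats 1000000
set_option synthInstance.maxHeartbeats 400000

/-- Auxiliary "uniform differentiability" test sets. -/
def Eset (f : X → Y) (G : Set X) (V₁ : Submodule ℝ X)
    (T : V₁ →L[ℝ] Y) (c r : ℝ) : Set X :=
  {x | x ∉ Metric.cthickening r Gᶜ ∧ ∀ v : V₁, ‖(v : X)‖ ≤ r →
    ‖f (x + (v : X)) - f x - T v‖ ≤ c * ‖(v : X)‖}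

lemma closedBall_subset_of_not_cthickening {G : Set X} {x : X} {r : ℝ}
    (h : x ∉ Metric.cthickening r Gᶜ) : closedBall x r ⊆ G := by
  intro w hw
  by_contra hwG
  exact h (Metric.mem_cthickening_iff.2 <|
    le_trans (EMetric.infEdist_le_edist_of_mem hwG) (by
      rw [edist_dist]
      exact ENNReal.ofReal_le_ofReal (by simpa [dist_comm] using hw)))

lemma not_cthickening_of_ball_subset {G : Set X} {x : X} {ρ r : ℝ}
    (hr0 : 0 ≤ r) (hr : r < ρ) (hρ : ball x ρ ⊆ G) : x ∉ Metric.cthickening r Gᶜ := by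
  intro h
  rw [Metric.mem_cthickening_iff] at h
  have h2 : ENNReal.ofReal ρ ≤ Metric.infEDist x Gᶜ := by
    rw [Metric.le_infEDist]
    intro y hy
    rw [edist_dist]
    refine ENNReal.ofReal_le_ofReal ?_
    by_contra hlt
    exact hy (hρ (by simpa [dist_comm] using lt_of_not_ge hlt))
  exact absurd ((ENNReal.ofReal_le_ofReal_iff hr0).1 (h2.trans h)) (not_le.2 hr)

/-- Relative closedness of `Eset` in the open set `(cthickening r Gᶜ)ᶜ`. -/
lemma closure_Eset_subset {f : X → Y} {G : Set X} (hG : IsOpen G) (hf : ContinuousOn f G)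
    {V₁ : Submodule ℝ X} {T : V₁ →L[ℝ] Y} {c r : ℝ} (hr : 0 ≤ r) {z : X}
    (hz : z ∈ closure (Eset f G V₁ T c r)) (hzU : z ∉ Metric.cthickening r Gᶜ) :
    z ∈ Eset f G V₁ T c r := by
  refine ⟨hzU, fun v hv => ?_⟩
  have hzG : z ∈ G := closedBall_subset_of_not_cthickening hzU (mem_closedBall_self hr)
  have hzvG : z + (v : X) ∈ G := closedBall_subset_of_not_cthickening hzU (by
    simpa [dist_eq_norm] using hv)
  have hne : (𝓝[Eset f G V₁ T c r] z).NeBot := mem_closure_iff_nhdsWithin_neBot.1 hz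
  have hcont : ContinuousAt (fun x : X => ‖f (x + (v : X)) - f x - T v‖) z := by
    have h1 : ContinuousAt f (z + (v : X)) := hf.continuousAt (hG.mem_nhds hzvG)
    have h2 : ContinuousAt f z := hf.continuousAt (hG.mem_nhds hzG)
    have h3 : ContinuousAt (fun x : X => f (x + (v : X))) z :=
      ContinuousAt.comp (g := f) h1 ((continuous_add_right (v : X)).continuousAt)
    exact ((h3.sub h2).sub continuousAt_const).norm
  refine le_of_tendsto (hcont.continuousWithinAt.tendsto (s := Eset f G V₁ T c r)) ?_
  filter_upwards [self_mem_nhdsWithin] with y hy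
  exact hy.2 v hv

/-- Fréchet differentiability from uniform differentiability along `V₁` plus
differentiability along a closed complement `V₂`. -/
lemma diff_of_unif {V₁ V₂ : Submodule ℝ X} (hV₁ : IsClosed (V₁ : Set X))
    (hV₂ : IsClosed (V₂ : Set X)) (hc : IsCompl V₁ V₂) (f : X → Y) (x : X)
    (T : V₁ →L[ℝ] Y)
    (hunif : ∀ ε > (0:ℝ), ∃ δ > (0:ℝ), ∀ (y : X) (v : V₁), ‖y - x‖ < δ → ‖(v : X)‖ < δ →
      ‖f (y + (v : X)) - f y - T v‖ ≤ ε * ‖(v : X)‖)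
    (hS : FrechetDiffAlong f V₂ x) : DifferentiableAt ℝ f x := by
  obtain ⟨π₁, π₂, hsum⟩ : ∃ (π₁ : X →L[ℝ] V₁) (π₂ : X →L[ℝ] V₂),
      ∀ h : X, ((π₁ h : X) + (π₂ h : X)) = h := by
    refine ⟨V₁.linearProjOfClosedCompl V₂ hc hV₁ hV₂,
      V₂.linearProjOfClosedCompl V₁ hc.symm hV₂ hV₁, fun h => ?_⟩
    have := Submodule.projection_add_projection_eq_self hc h
    simpa [Submodule.coe_continuous_linearProjOfClosedCompl'] using this
  set S : V₂ →L[ℝ] Y := fderiv ℝ (fun v : V₂ => f (x + (v : X))) 0 with hSdef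
  have hS' : HasFDerivAt (fun v : V₂ => f (x + (v : X))) S 0 := hS.hasFDerivAt
  set L : X →L[ℝ] Y := T.comp π₁ + S.comp π₂ with hL
  have key : HasFDerivAt f L x := by
    rw [hasFDerivAt_iff_isLittleO_nhds_zero]
    have g₂ : (fun h : X => f (x + (π₂ h : X)) - f x - S (π₂ h)) =o[𝓝 0] fun h : X => h := by
      have hπ₂d : HasFDerivAt (fun h : X => π₂ h) π₂ (0 : X) := π₂.hasFDerivAt
      have hS0 : HasFDerivAt (fun v : V₂ => f (x + (v : X))) S (π₂ 0) := by
        simpa using hS'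
      have hcomp := hS0.comp (0 : X) hπ₂d
      rw [hasFDerivAt_iff_isLittleO_nhds_zero] at hcomp
      simpa using hcomp
    have g₁ : (fun h : X => f (x + (π₂ h : X) + (π₁ h : X)) - f (x + (π₂ h : X)) - T (π₁ h))
        =o[𝓝 0] fun h : X => h := by
      rw [isLittleO_iff]
      intro c hcpos
      set C : ℝ := ‖π₁‖ + ‖π₂‖ + 1 with hC
      have hCpos : 0 < C := by positivity
      obtain ⟨δ, hδpos, hδ⟩ := hunif (c / C) (by positivity)
      rw [Metric.eventually_nhds_iff]
      refine ⟨δ / C, by positivity, fun h hh => ?_⟩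
      rw [dist_zero_right] at hh
      have h1 : ‖(π₁ h : X)‖ < δ := by
        calc ‖(π₁ h : X)‖ ≤ ‖π₁‖ * ‖h‖ := π₁.le_opNorm h
        _ ≤ C * ‖h‖ := by nlinarith [norm_nonneg h, norm_nonneg π₂]
        _ < C * (δ / C) := by exact (mul_lt_mul_iff_right₀ hCpos).2 hh
        _ = δ := by field_simp
      have h2 : ‖(x + (π₂ h : X)) - x‖ < δ := by
        have : ‖(π₂ h : X)‖ ≤ ‖π₂‖ * ‖h‖ := π₂.le_opNorm h
        calc ‖(x + (π₂ h : X)) - x‖ = ‖(π₂ h : X)‖ := by rw [add_sub_cancel_left]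
        _ ≤ ‖π₂‖ * ‖h‖ := this
        _ ≤ C * ‖h‖ := by nlinarith [norm_nonneg h, norm_nonneg π₁]
        _ < C * (δ / C) := (mul_lt_mul_iff_right₀ hCpos).2 hh
        _ = δ := by field_simp
      have := hδ (x + (π₂ h : X)) (π₁ h) h2 h1
      calc ‖f (x + (π₂ h : X) + (π₁ h : X)) - f (x + (π₂ h : X)) - T (π₁ h)‖
          ≤ (c / C) * ‖(π₁ h : X)‖ := this
        _ ≤ (c / C) * (‖π₁‖ * ‖h‖) := by
            exact mul_le_mul_of_nonneg_left (π₁.le_opNorm h) (by positivity)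
        _ ≤ (c / C) * (C * ‖h‖) := by
            refine mul_le_mul_of_nonneg_left ?_ (by positivity)
            nlinarith [norm_nonneg h, norm_nonneg π₂]
        _ = c * ‖h‖ := by field_simp
    have := g₁.add g₂
    refine this.congr' (Filter.Eventually.of_forall fun h => ?_)
      (Filter.Eventually.of_forall fun h => rfl)
    have hx : x + (π₂ h : X) + (π₁ h : X) = x + h := by
      rw [add_assoc, add_comm ((π₂ h : X)) _, hsum h]
    show f (x + (π₂ h : X) + (π₁ h : X)) - f (x + (π₂ h : X)) - T (π₁ h)
        + (f (x + (π₂ h : X)) - f x - S (π₂ h)) = f (x + h) - f x - L h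
    rw [hx]
    simp only [hL, ContinuousLinearMap.add_apply, ContinuousLinearMap.coe_comp',
      Function.comp_apply]
    abel
  exact key.differentiableAt

theorem meagre_exceptional_set_along_complemented_subspace
    (V₁ : Submodule ℝ X) (hV₁ : IsClosed (V₁ : Set X))
    [TopologicalSpace.SeparableSpace (V₁ →L[ℝ] Y)]
    (G : Set X) (hG : IsOpen G) (f : X → Y) (hf : ContinuousOn f G) :
    ∃ A : Set X, A ⊆ G ∧ IsMeagre A ∧
      ∀ x ∈ G \ A,
        (FrechetDiffAlong f V₁ x ∧
          ∃ V₂ : Submodule ℝ X, IsClosed (V₂ : Set X) ∧ IsCompl V₁ V₂ ∧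
            FrechetDiffAlong f V₂ x) →
        DifferentiableAt ℝ f x := by
  classical
  set Tseq : ℕ → (V₁ →L[ℝ] Y) := TopologicalSpace.denseSeq (V₁ →L[ℝ] Y) with hTseq
  have hdense : DenseRange Tseq := TopologicalSpace.denseRange_denseSeq _
  set N : ℕ → ℕ → ℕ → Set X := fun i n m =>
    frontier (closure (Eset f G V₁ (Tseq i) ((n : ℝ) + 1)⁻¹ ((m : ℝ) + 1)⁻¹)) with hN
  refine ⟨G ∩ ⋃ i, ⋃ n, ⋃ m, N i n m, inter_subset_left, ?_, ?_⟩
  · refine IsMeagre.mono inter_subset_right ?_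
    refine isMeagre_iUnion fun i => isMeagre_iUnion fun n => isMeagre_iUnion fun m => ?_
    have h1 : IsNowhereDense (N i n m) :=
      isClosed_frontier.isNowhereDense_iff.2 (interior_frontier isClosed_closure)
    exact isMeagre_iff_countable_union_isNowhereDense.mpr
      ⟨{N i n m}, by simpa using h1, countable_singleton _, by simp⟩
  · rintro x ⟨hxG, hxA⟩ ⟨hd1, V₂, hV₂, hcompl, hd2⟩
    have hxU : x ∉ ⋃ i, ⋃ n, ⋃ m, N i n m := fun h => hxA ⟨hxG, h⟩
    set T₀ : V₁ →L[ℝ] Y := fderiv ℝ (fun v : V₁ => f (x + (v : X))) 0 with hT₀def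
    have hT₀ : HasFDerivAt (fun v : V₁ => f (x + (v : X))) T₀ 0 := hd1.hasFDerivAt
    have hunif : ∀ ε > (0:ℝ), ∃ δ > (0:ℝ), ∀ (y : X) (v : V₁), ‖y - x‖ < δ → ‖(v : X)‖ < δ →
        ‖f (y + (v : X)) - f y - T₀ v‖ ≤ ε * ‖(v : X)‖ := by
      intro ε hε
      obtain ⟨n, hn⟩ : ∃ n : ℕ, ((n : ℝ) + 1)⁻¹ ≤ ε / 2 := by
        obtain ⟨n, hn⟩ := exists_nat_gt (2 / ε)
        refine ⟨n, ?_⟩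
        rw [show ε / 2 = (2 / ε)⁻¹ by rw [inv_div]]
        refine inv_anti₀ (by positivity) (by linarith)
      set c : ℝ := ((n : ℝ) + 1)⁻¹ with hcdef
      have hcpos : 0 < c := by positivity
      set η : ℝ := c / 2 with hηdef
      have hηpos : 0 < η := by positivity
      obtain ⟨i, hi⟩ := hdense.exists_dist_lt T₀ hηpos
      have hiT : ‖Tseq i - T₀‖ < η := by
        have e : dist (Tseq i) T₀ = ‖Tseq i - T₀‖ := by with_unfolding_all exact dist_eq_norm (Tseq i) T₀
        rw [dist_comm] at hi
        linarith [e ▸ hi]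
      have hlo := isLittleO_iff.1 (hasFDerivAt_iff_isLittleO_nhds_zero.1 hT₀) hηpos
      rw [Metric.eventually_nhds_iff] at hlo
      obtain ⟨δ₀, hδ₀pos, hδ₀⟩ := hlo
      obtain ⟨ρ, hρpos, hρ⟩ := Metric.isOpen_iff.1 hG x hxG
      obtain ⟨m, hm⟩ : ∃ m : ℕ, ((m : ℝ) + 1)⁻¹ < min ρ δ₀ := by
        obtain ⟨m, hm⟩ := exists_nat_gt (min ρ δ₀)⁻¹
        refine ⟨m, ?_⟩
        rw [show min ρ δ₀ = ((min ρ δ₀)⁻¹)⁻¹ by rw [inv_inv]]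
        refine inv_strictAnti₀ (by positivity) (by linarith)
      set r : ℝ := ((m : ℝ) + 1)⁻¹ with hrdef
      have hrpos : 0 < r := by positivity
      set E : Set X := Eset f G V₁ (Tseq i) c r with hE
      have hxE : x ∈ E := by
        refine ⟨not_cthickening_of_ball_subset hrpos.le (hm.trans_le (min_le_left _ _)) hρ,
          fun v hv => ?_⟩
        have hvδ₀ : dist v (0 : V₁) < δ₀ := by
          rw [dist_zero_right]
          calc ‖v‖ = ‖(v : X)‖ := rfl
          _ ≤ r := hv
          _ < δ₀ := hm.trans_le (min_le_right _ _)
        have hb := hδ₀ hvδ₀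
        simp only [zero_add, Submodule.coe_zero, add_zero] at hb
        have heq : f (x + (v : X)) - f x - Tseq i v
            = (f (x + (v : X)) - f x - T₀ v) + (T₀ v - Tseq i v) := by abel
        rw [heq]
        have hb2 : ‖T₀ v - Tseq i v‖ ≤ η * ‖(v : X)‖ := by
          have : T₀ v - Tseq i v = (T₀ - Tseq i) v := by simp
          rw [this]
          calc ‖(T₀ - Tseq i) v‖ ≤ ‖T₀ - Tseq i‖ * ‖v‖ := (T₀ - Tseq i).le_opNorm v
          _ ≤ η * ‖v‖ := by
              refine mul_le_mul_of_nonneg_right ?_ (norm_nonneg _)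
              have e2 : ‖T₀ - Tseq i‖ = ‖Tseq i - T₀‖ := by with_unfolding_all exact norm_sub_rev T₀ (Tseq i)
              exact (le_of_eq e2).trans hiT.le
        refine (norm_add_le _ _).trans ?_
        have hv0 : (0:ℝ) ≤ ‖(v : X)‖ := norm_nonneg _
        calc ‖f (x + (v : X)) - f x - T₀ v‖ + ‖T₀ v - Tseq i v‖
            ≤ η * ‖(v : X)‖ + η * ‖(v : X)‖ := add_le_add hb hb2
          _ = (η + η) * ‖(v : X)‖ := by ring
          _ ≤ c * ‖(v : X)‖ := by
              refine mul_le_mul_of_nonneg_right ?_ hv0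
              rw [hηdef]; linarith
      have hxcl : x ∈ closure E := subset_closure hxE
      have hxnF : x ∉ N i n m := fun h => hxU
        (mem_iUnion.2 ⟨i, mem_iUnion.2 ⟨n, mem_iUnion.2 ⟨m, h⟩⟩⟩)
      have hxint : x ∈ interior (closure E) := by
        by_contra h
        refine hxnF ?_
        show x ∈ frontier (closure E)
        rw [← closure_diff_interior]
        exact ⟨subset_closure hxcl, h⟩
      obtain ⟨δ₁, hδ₁pos, hδ₁⟩ := Metric.isOpen_iff.1 isOpen_interior x hxint
      have hUopen : IsOpen (Metric.cthickening r Gᶜ)ᶜ := Metric.isClosed_cthickening.isOpen_compl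
      obtain ⟨δ₂, hδ₂pos, hδ₂⟩ := Metric.isOpen_iff.1 hUopen x hxE.1
      refine ⟨min (min δ₁ δ₂) r, lt_min (lt_min hδ₁pos hδ₂pos) hrpos, fun y v hy hv => ?_⟩
      have hyδ₁ : y ∈ ball x δ₁ := by
        rw [mem_ball, dist_eq_norm]
        exact hy.trans_le ((min_le_left _ _).trans (min_le_left _ _))
      have hyδ₂ : y ∈ ball x δ₂ := by
        rw [mem_ball, dist_eq_norm]
        exact hy.trans_le ((min_le_left _ _).trans (min_le_right _ _))
      have hyE : y ∈ E :=
        closure_Eset_subset hG hf hrpos.le (interior_subset (hδ₁ hyδ₁)) (hδ₂ hyδ₂)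
      have hvr : ‖(v : X)‖ ≤ r := (hv.trans_le (min_le_right _ _)).le
      have hb := hyE.2 v hvr
      have heq : f (y + (v : X)) - f y - T₀ v
          = (f (y + (v : X)) - f y - Tseq i v) + (Tseq i v - T₀ v) := by abel
      rw [heq]
      refine (norm_add_le _ _).trans ?_
      have hb2 : ‖Tseq i v - T₀ v‖ ≤ η * ‖(v : X)‖ := by
        have : Tseq i v - T₀ v = (Tseq i - T₀) v := by simp
        rw [this]
        calc ‖(Tseq i - T₀) v‖ ≤ ‖Tseq i - T₀‖ * ‖v‖ := (Tseq i - T₀).le_opNorm v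
        _ ≤ η * ‖v‖ := mul_le_mul_of_nonneg_right hiT.le (norm_nonneg _)
      have hv0 : (0:ℝ) ≤ ‖(v : X)‖ := norm_nonneg _
      calc ‖f (y + (v : X)) - f y - Tseq i v‖ + ‖Tseq i v - T₀ v‖
          ≤ c * ‖(v : X)‖ + η * ‖(v : X)‖ := add_le_add hb hb2
        _ = (c + η) * ‖(v : X)‖ := by ring
        _ ≤ ε * ‖(v : X)‖ := by
            refine mul_le_mul_of_nonneg_right ?_ hv0
            rw [hηdef]; linarith
    exact diff_of_unif hV₁ hV₂ hcompl f x T₀ hunif hd2
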